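/- For each fixed θ ∈ [0,π], the total curvature κ(ℓ,θ) = 2·arccos(−ℓ²/4 − (1−ℓ²/4)·cos θ) + 2·arccos(ℓ²/2 − 1) of the equilateral spatial quadrilateral P₄(ℓ,θ) is non-increasing as a function of ℓ on [0,2]. Equivalently, in the coordinates t = ℓ²/4 ∈ [0,1] and c = cos θ ∈ [−1,1], the function κ̃(t,c) = 2·arccos(−t − (1−t)·c) + 2·arccos(2t − 1) is non-increasing in t on [0,1] for each fixed c ∈ [−1,1]. -/

import Mathlib

open Real

/-- Total curvature of the equilateral spatial quadrilateral `P₄(ℓ,θ)` in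
action-angle coordinates. -/
noncomputable def totalCurv (ℓ θ : ℝ) : ℝ :=
  2 * Real.arccos (-ℓ ^ 2 / 4 - (1 - ℓ ^ 2 / 4) * Real.cos θ) +
    2 * Real.arccos (ℓ ^ 2 / 2 - 1)

lemma key_antitone {c : ℝ} (hc : c ∈ Set.Icc (-1 : ℝ) 1) :
    AntitoneOn
      (fun t : ℝ =>
        2 * Real.arccos (-t - (1 - t) * c) + 2 * Real.arccos (2 * t - 1))
      (Set.Icc 0 1) := by
  obtain ⟨hc1, hc2⟩ := hc
  rcases eq_or_lt_of_le hc2 with hceq | hclt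
  · -- c = 1 : first term is constant arccos (-1)
    intro s hs t ht hst
    obtain ⟨hs0, hs1⟩ := hs
    obtain ⟨ht0, ht1⟩ := ht
    have h1 : -s - (1 - s) * c = -1 := by rw [hceq]; ring
    have h2 : -t - (1 - t) * c = -1 := by rw [hceq]; ring
    simp only [h1, h2]
    have := Real.strictAntiOn_arccos.antitoneOn
      (a := 2 * s - 1) (b := 2 * t - 1)
      ⟨by linarith, by linarith⟩ ⟨by linarith, by linarith⟩ (by linarith)
    linarith
  · -- c < 1 : derivative argument
    apply antitoneOn_of_deriv_nonpos (convex_Icc 0 1)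
    · apply Continuous.continuousOn
      exact (continuous_const.mul (Real.continuous_arccos.comp (by fun_prop))).add
        (continuous_const.mul (Real.continuous_arccos.comp (by fun_prop)))
    · rw [interior_Icc]
      intro t ht
      obtain ⟨ht0, ht1⟩ := ht
      have hx1 : -t - (1 - t) * c ≠ -1 := by nlinarith
      have hx2 : -t - (1 - t) * c ≠ 1 := by nlinarith
      have hy1 : 2 * t - 1 ≠ -1 := by nlinarith
      have hy2 : 2 * t - 1 ≠ 1 := by nlinarith
      have hin1 : HasDerivAt (fun t : ℝ => -t - (1 - t) * c) (c - 1) t := by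
        have h := (((hasDerivAt_id t).const_sub 1).mul_const c).const_sub 0
        have h2 := ((hasDerivAt_id t).neg).sub
          (((hasDerivAt_id t).const_sub 1).mul_const c)
        exact h2.congr_deriv (by ring)
      have hin2 : HasDerivAt (fun t : ℝ => 2 * t - 1) 2 t := by
        simpa using ((hasDerivAt_id t).const_mul 2).sub_const 1
      have hA := (Real.hasDerivAt_arccos hx1 hx2).comp t hin1
      have hB := (Real.hasDerivAt_arccos hy1 hy2).comp t hin2
      exact ((hA.const_mul 2).add (hB.const_mul 2)).differentiableAt.differentiableWithinAt
    · rw [interior_Icc]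
      intro t ht
      obtain ⟨ht0, ht1⟩ := ht
      set x := -t - (1 - t) * c with hxdef
      have hx1 : x ≠ -1 := by rw [hxdef]; nlinarith
      have hx2 : x ≠ 1 := by rw [hxdef]; nlinarith
      have hy1 : 2 * t - 1 ≠ -1 := by nlinarith
      have hy2 : 2 * t - 1 ≠ 1 := by nlinarith
      have hin1 : HasDerivAt (fun t : ℝ => -t - (1 - t) * c) (c - 1) t := by
        have h2 := ((hasDerivAt_id t).neg).sub
          (((hasDerivAt_id t).const_sub 1).mul_const c)
        exact h2.congr_deriv (by ring)
      have hin2 : HasDerivAt (fun t : ℝ => 2 * t - 1) 2 t := by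
        simpa using ((hasDerivAt_id t).const_mul 2).sub_const 1
      have hA := (Real.hasDerivAt_arccos hx1 hx2).comp t hin1
      have hB := (Real.hasDerivAt_arccos hy1 hy2).comp t hin2
      have hD := (hA.const_mul 2).add (hB.const_mul 2)
      simp only [Function.comp_def] at hD
      rw [(show HasDerivAt (fun t : ℝ => 2 * Real.arccos (-t - (1 - t) * c) + 2 * Real.arccos (2 * t - 1)) _ t from hD).deriv]
      -- now show the derivative value is ≤ 0
      set A := Real.sqrt (1 - x ^ 2) with hAdef
      set B := Real.sqrt (1 - (2 * t - 1) ^ 2) with hBdef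
      have hxpos : (0 : ℝ) < 1 - x ^ 2 := by
        have h0 : (0:ℝ) < 1 + c + t * (1 - c) := by nlinarith [mul_pos ht0 (sub_pos.2 hclt)]
        have h1 : (0:ℝ) < (1 - c) * (1 - t) * (1 + c + t * (1 - c)) :=
          mul_pos (mul_pos (sub_pos.2 hclt) (sub_pos.2 ht1)) h0
        have h2 : (1 - c) * (1 - t) * (1 + c + t * (1 - c)) = 1 - x ^ 2 := by
          rw [hxdef]; ring
        linarith
      have hypos : (0 : ℝ) < 1 - (2 * t - 1) ^ 2 := by nlinarith
      have hApos : 0 < A := Real.sqrt_pos.2 hxpos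
      have hBpos : 0 < B := Real.sqrt_pos.2 hypos
      have hA2 : A ^ 2 = 1 - x ^ 2 := Real.sq_sqrt hxpos.le
      have hB2 : B ^ 2 = 1 - (2 * t - 1) ^ 2 := Real.sq_sqrt hypos.le
      have hsq : (2 * (1 - c) * B) ^ 2 ≤ (4 * A) ^ 2 := by
        have e1 : (2 * (1 - c) * B) ^ 2 = 4 * (1 - c) ^ 2 * (1 - (2 * t - 1) ^ 2) := by
          rw [mul_pow, mul_pow, hB2]; ring
        have e2 : (4 * A) ^ 2 = 16 * (1 - x ^ 2) := by rw [mul_pow, hA2]; ring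
        rw [e1, e2, hxdef]
        nlinarith [mul_nonneg (mul_nonneg (sub_nonneg.2 hclt.le) (by linarith : (0:ℝ) ≤ 1 - t)) (by linarith : (0:ℝ) ≤ 1 + c)]
      have hle : 2 * (1 - c) * B ≤ 4 * A := by
        have h := Real.sqrt_le_sqrt hsq
        have hn1 : (0:ℝ) ≤ 2 * (1 - c) * B := by nlinarith [hBpos.le]
        rwa [Real.sqrt_sq hn1, Real.sqrt_sq (by positivity)] at h
      have hdiv : 2 * (1 - c) / A ≤ 4 / B := by
        rw [div_le_div_iff₀ hApos hBpos]; linarith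
      have e : 2 * (-(1 / A) * (c - 1)) + 2 * (-(1 / B) * 2)
          = 2 * (1 - c) / A - 4 / B := by
        field_simp
        ring
      rw [e]
      linarith

/-- For fixed `θ ∈ [0,π]`, the total curvature `κ(ℓ,θ)` is non-increasing in
`ℓ` on `[0,2]`; equivalently, in the coordinates `t = ℓ²/4`, `c = cos θ`, the
function `κ̃(t,c) = 2 arccos(−t − (1−t)c) + 2 arccos(2t − 1)` is
non-increasing in `t` on `[0,1]` for each fixed `c ∈ [−1,1]`. -/
theorem totalCurv_antitoneOn_ell :
    (∀ θ ∈ Set.Icc (0 : ℝ) Real.pi,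
      AntitoneOn (fun ℓ : ℝ => totalCurv ℓ θ) (Set.Icc 0 2)) ∧
    (∀ c ∈ Set.Icc (-1 : ℝ) 1,
      AntitoneOn
        (fun t : ℝ =>
          2 * Real.arccos (-t - (1 - t) * c) + 2 * Real.arccos (2 * t - 1))
        (Set.Icc 0 1)) := by
  constructor
  · intro θ hθ ℓ₁ h₁ ℓ₂ h₂ hle
    obtain ⟨h10, h12⟩ := h₁
    obtain ⟨h20, h22⟩ := h₂
    have hc : Real.cos θ ∈ Set.Icc (-1 : ℝ) 1 :=
      ⟨Real.neg_one_le_cos θ, Real.cos_le_one θ⟩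
    have hm1 : ℓ₁ ^ 2 / 4 ∈ Set.Icc (0 : ℝ) 1 := ⟨by positivity, by nlinarith⟩
    have hm2 : ℓ₂ ^ 2 / 4 ∈ Set.Icc (0 : ℝ) 1 := ⟨by positivity, by nlinarith⟩
    have hmono : ℓ₁ ^ 2 / 4 ≤ ℓ₂ ^ 2 / 4 := by nlinarith
    have h := key_antitone hc hm1 hm2 hmono
    have e : ∀ ℓ : ℝ, totalCurv ℓ θ =
        2 * Real.arccos (-(ℓ ^ 2 / 4) - (1 - ℓ ^ 2 / 4) * Real.cos θ) +
          2 * Real.arccos (2 * (ℓ ^ 2 / 4) - 1) := by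
      intro ℓ
      unfold totalCurv
      norm_num [neg_div]
      ring_nf
    show totalCurv ℓ₂ θ ≤ totalCurv ℓ₁ θ
    rw [e ℓ₁, e ℓ₂]
    exact h
  · exact fun c hc => key_antitone hc
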